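/- The Lamb–Oseen vortex is a solution of the incompressible Navier–Stokes equations in ℝ² away from the origin: there exists a function p : (0,∞) × (ℝ² ∖ {0}) → ℝ, differentiable in the space variable, such that for every t > 0 and every x ≠ 0 one has ∂ₜΘ(t,x) − ΔΘ(t,x) + ((Θ(t)·∇)Θ(t))(x) + ∇ₓp(t,x) = 0 and div Θ(t,·)(x) = 0. -/

import Mathlib

open Real MeasureTheory Filter
open scoped Topology ENNReal NNReal

noncomputable section

/-- The perpendicular vector `x⊥ = (x₂, -x₁)`. -/
def perp (x : EuclideanSpace ℝ (Fin 2)) : EuclideanSpace ℝ (Fin 2) :=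
  (WithLp.equiv 2 (Fin 2 → ℝ)).symm ![x 1, -(x 0)]

/-- The Lamb–Oseen vortex `Θ(t,x) = x⊥/(2π|x|²) · (1 - exp(-|x|²/(4t)))`, with value `0`
at `x = 0` (automatic here, since in Lean `0/0 = 0` and `perp 0 = 0`). -/
def lambOseen (t : ℝ) (x : EuclideanSpace ℝ (Fin 2)) : EuclideanSpace ℝ (Fin 2) :=
  ((1 - Real.exp (-‖x‖ ^ 2 / (4 * t))) / (2 * π * ‖x‖ ^ 2)) • perp x

/-- The partial derivative `∂ᵢ f (x)` of a scalar function on `ℝ²`. -/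
def pd (i : Fin 2) (f : EuclideanSpace ℝ (Fin 2) → ℝ) (x : EuclideanSpace ℝ (Fin 2)) : ℝ :=
  fderiv ℝ f x (EuclideanSpace.single i 1)

/-- The `i`-th component of the convective term `(u·∇)u`, namely `u₁ ∂₁uᵢ + u₂ ∂₂uᵢ`. -/
def convTerm (u : EuclideanSpace ℝ (Fin 2) → EuclideanSpace ℝ (Fin 2))
    (x : EuclideanSpace ℝ (Fin 2)) (i : Fin 2) : ℝ :=
  u x 0 * pd 0 (fun y => u y i) x + u x 1 * pd 1 (fun y => u y i) x

/-! ### Auxiliary machinery -/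

local notation "E2" => EuclideanSpace ℝ (Fin 2)

/-- Squared norm in coordinates. -/
def qf (y : E2) : ℝ := y 0 ^ 2 + y 1 ^ 2

lemma norm_sq_eq (x : E2) : ‖x‖ ^ 2 = qf x := by
  rw [EuclideanSpace.norm_eq, Real.sq_sqrt (by positivity)]
  simp [qf, Fin.sum_univ_two, sq_abs]

lemma qf_pos {x : E2} (hx : x ≠ 0) : 0 < qf x := by
  rw [← norm_sq_eq]; exact pow_pos (norm_pos_iff.mpr hx) 2

/-- The differential of `qf`. -/
def Lq (x : E2) : E2 →L[ℝ] ℝ :=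
  (2 * x 0) • (EuclideanSpace.proj 0 : E2 →L[ℝ] ℝ) + (2 * x 1) • (EuclideanSpace.proj 1 : E2 →L[ℝ] ℝ)

lemma hasFDerivAt_qf (x : E2) : HasFDerivAt qf (Lq x) x := by
  have h0 : HasFDerivAt (fun y : E2 => y 0) (EuclideanSpace.proj 0 : E2 →L[ℝ] ℝ) x :=
    (EuclideanSpace.proj (0 : Fin 2) : E2 →L[ℝ] ℝ).hasFDerivAt
  have h1 : HasFDerivAt (fun y : E2 => y 1) (EuclideanSpace.proj 1 : E2 →L[ℝ] ℝ) x :=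
    (EuclideanSpace.proj (1 : Fin 2) : E2 →L[ℝ] ℝ).hasFDerivAt
  have h := (h0.mul h0).add (h1.mul h1)
  have hf : qf = ((fun y : E2 => y 0) * fun y : E2 => y 0) + (fun y : E2 => y 1) * fun y : E2 => y 1 := by
    ext y; simp [qf, sq]
  rw [hf]
  refine h.congr_fderiv ?_
  unfold Lq; ext v; simp; ring

lemma Lq_single (x : E2) (j : Fin 2) : Lq x (EuclideanSpace.single j 1) = 2 * x j := by
  fin_cases j <;> simp [Lq, EuclideanSpace.single_apply]

lemma proj_single (k j : Fin 2) :
    (EuclideanSpace.proj k : E2 →L[ℝ] ℝ) (EuclideanSpace.single j 1) = if k = j then 1 else 0 := by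
  fin_cases k <;> fin_cases j <;> simp [EuclideanSpace.single_apply]

/-- Radial profile of the Lamb–Oseen vortex (as a function of `s = |x|²`). -/
def f0 (t s : ℝ) : ℝ := (1 - Real.exp (-s / (4 * t))) / (2 * π * s)
/-- Its `s`-derivative. -/
def f1 (t s : ℝ) : ℝ :=
  (Real.exp (-s / (4 * t)) * s / (4 * t) - (1 - Real.exp (-s / (4 * t)))) / (2 * π * s ^ 2)
/-- Its second `s`-derivative. -/
def f2 (t s : ℝ) : ℝ := (-(Real.exp (-s / (4 * t))) * s ^ 2 / (16 * t ^ 2)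
    - 2 * (Real.exp (-s / (4 * t)) * s / (4 * t) - (1 - Real.exp (-s / (4 * t))))) / (2 * π * s ^ 3)
/-- Its `t`-derivative. -/
def fT (t s : ℝ) : ℝ := -(Real.exp (-s / (4 * t))) / (8 * π * t ^ 2)

lemma hasDerivAt_exp_s (t s : ℝ) :
    HasDerivAt (fun s => Real.exp (-s / (4 * t))) (Real.exp (-s / (4 * t)) * (-1 / (4 * t))) s := by
  have h : HasDerivAt (fun s : ℝ => -s / (4 * t)) (-1 / (4 * t)) s := by
    simpa using ((hasDerivAt_id s).neg.div_const (4 * t))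
  exact h.exp

lemma hasDerivAt_f0 {t s : ℝ} (ht : t ≠ 0) (hs : s ≠ 0) :
    HasDerivAt (fun s => f0 t s) (f1 t s) s := by
  have hnum : HasDerivAt (fun s : ℝ => 1 - Real.exp (-s / (4 * t)))
      (-(Real.exp (-s / (4 * t)) * (-1 / (4 * t)))) s := (hasDerivAt_exp_s t s).const_sub 1
  have hden : HasDerivAt (fun s : ℝ => 2 * π * s) (2 * π) s := by
    simpa using (hasDerivAt_id s).const_mul (2 * π)
  have hd : (2 * π * s) ≠ 0 := by
    have := Real.pi_ne_zero; positivity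
  have h := hnum.div hden hd
  refine h.congr_deriv ?_
  unfold f1
  field_simp

lemma hasDerivAt_f1 {t s : ℝ} (ht : t ≠ 0) (hs : s ≠ 0) :
    HasDerivAt (fun s => f1 t s) (f2 t s) s := by
  have hE := hasDerivAt_exp_s t s
  have hnum : HasDerivAt
      (fun s : ℝ => Real.exp (-s / (4 * t)) * s / (4 * t) - (1 - Real.exp (-s / (4 * t))))
      ((Real.exp (-s / (4 * t)) * (-1 / (4 * t)) * s + Real.exp (-s / (4 * t)) * 1) / (4 * t)
        - (-(Real.exp (-s / (4 * t)) * (-1 / (4 * t))))) s :=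
    ((hE.mul (hasDerivAt_id s)).div_const (4 * t)).sub (hE.const_sub 1)
  have hden : HasDerivAt (fun s : ℝ => 2 * π * s ^ 2) (2 * π * (2 * s)) s := by
    have := (hasDerivAt_pow 2 s).const_mul (2 * π)
    simpa using this
  have hd : (2 * π * s ^ 2) ≠ 0 := by
    have := Real.pi_ne_zero; positivity
  have h := hnum.div hden hd
  refine h.congr_deriv ?_
  unfold f2
  field_simp
  ring

lemma hasDerivAt_f0_t {t s : ℝ} (ht : t ≠ 0) (hs : s ≠ 0) :
    HasDerivAt (fun τ => f0 τ s) (fT t s) t := by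
  have harg : HasDerivAt (fun τ : ℝ => -s / (4 * τ)) (s / (4 * t ^ 2)) t := by
    have h4 : HasDerivAt (fun τ : ℝ => 4 * τ) 4 t := by simpa using (hasDerivAt_id t).const_mul 4
    have h := (hasDerivAt_const t (-s)).div h4 (by simpa using ht : (4 : ℝ) * t ≠ 0)
    refine h.congr_deriv ?_
    field_simp
    ring
  have hE : HasDerivAt (fun τ : ℝ => Real.exp (-s / (4 * τ)))
      (Real.exp (-s / (4 * t)) * (s / (4 * t ^ 2))) t := harg.exp
  have h := (hE.const_sub 1).div_const (2 * π * s)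
  refine h.congr_deriv ?_
  unfold fT
  have hπ := Real.pi_ne_zero
  field_simp
  ring

lemma heat_identity {t s : ℝ} (ht : t ≠ 0) (hs : s ≠ 0) :
    fT t s = 4 * s * f2 t s + 8 * f1 t s := by
  have hπ := Real.pi_ne_zero
  unfold fT f2 f1
  field_simp
  ring

lemma perp_apply0 (x : E2) : perp x 0 = x 1 := by
  simp [perp]
lemma perp_apply1 (x : E2) : perp x 1 = -(x 0) := by
  simp [perp]

lemma lambOseen_apply0 (t : ℝ) (x : E2) : lambOseen t x 0 = f0 t (qf x) * x 1 := by
  have h : lambOseen t x 0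
      = ((1 - Real.exp (-‖x‖ ^ 2 / (4 * t))) / (2 * π * ‖x‖ ^ 2)) * perp x 0 := by
    simp [lambOseen, PiLp.smul_apply, smul_eq_mul]
  rw [h, perp_apply0, norm_sq_eq, f0]

lemma lambOseen_apply1 (t : ℝ) (x : E2) : lambOseen t x 1 = -(f0 t (qf x) * x 0) := by
  have h : lambOseen t x 1
      = ((1 - Real.exp (-‖x‖ ^ 2 / (4 * t))) / (2 * π * ‖x‖ ^ 2)) * perp x 1 := by
    simp [lambOseen, PiLp.smul_apply, smul_eq_mul]
  rw [h, perp_apply1, norm_sq_eq, f0]; ring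

lemma hasFDerivAt_radial {h h' : ℝ → ℝ} {g : E2 → ℝ} {g' : E2 →L[ℝ] ℝ} {x : E2}
    (hh : HasDerivAt h (h' (qf x)) (qf x)) (hg : HasFDerivAt g g' x) :
    HasFDerivAt (fun y => h (qf y) * g y)
      (h (qf x) • g' + g x • ((h' (qf x)) • Lq x)) x := by
  have hc : HasFDerivAt (fun y => h (qf y)) ((h' (qf x)) • Lq x) x :=
    hh.comp_hasFDerivAt x (hasFDerivAt_qf x)
  exact hc.mul hg

/-! ### First space derivatives of the vortex components -/

lemma pd0_theta0 {t : ℝ} (ht : t ≠ 0) {y : E2} (hy : y ≠ 0) :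
    pd 0 (fun z => lambOseen t z 0) y = f1 t (qf y) * (2 * (y 0 * y 1)) := by
  have he : (fun z : E2 => lambOseen t z 0)
      = fun z => f0 t (qf z) * (EuclideanSpace.proj (1 : Fin 2) : E2 →L[ℝ] ℝ) z :=
    funext fun z => lambOseen_apply0 t z
  have h := hasFDerivAt_radial (hasDerivAt_f0 ht (qf_pos hy).ne')
    ((EuclideanSpace.proj (1 : Fin 2) : E2 →L[ℝ] ℝ)).hasFDerivAt (x := y)
  rw [pd, he, h.fderiv]
  simp [Lq_single, proj_single]
  ring

lemma pd1_theta0 {t : ℝ} (ht : t ≠ 0) {y : E2} (hy : y ≠ 0) :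
    pd 1 (fun z => lambOseen t z 0) y = f1 t (qf y) * (2 * (y 1 * y 1)) + f0 t (qf y) := by
  have he : (fun z : E2 => lambOseen t z 0)
      = fun z => f0 t (qf z) * (EuclideanSpace.proj (1 : Fin 2) : E2 →L[ℝ] ℝ) z :=
    funext fun z => lambOseen_apply0 t z
  have h := hasFDerivAt_radial (hasDerivAt_f0 ht (qf_pos hy).ne')
    ((EuclideanSpace.proj (1 : Fin 2) : E2 →L[ℝ] ℝ)).hasFDerivAt (x := y)
  rw [pd, he, h.fderiv]
  simp [Lq_single, proj_single]
  ring

lemma pd0_theta1 {t : ℝ} (ht : t ≠ 0) {y : E2} (hy : y ≠ 0) :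
    pd 0 (fun z => lambOseen t z 1) y = -(f1 t (qf y) * (2 * (y 0 * y 0)) + f0 t (qf y)) := by
  have he : (fun z : E2 => lambOseen t z 1)
      = fun z => -(f0 t (qf z) * (EuclideanSpace.proj (0 : Fin 2) : E2 →L[ℝ] ℝ) z) :=
    funext fun z => lambOseen_apply1 t z
  have h := (hasFDerivAt_radial (hasDerivAt_f0 ht (qf_pos hy).ne')
    ((EuclideanSpace.proj (0 : Fin 2) : E2 →L[ℝ] ℝ)).hasFDerivAt (x := y)).fun_neg
  rw [pd, he, h.fderiv]
  simp [Lq_single, proj_single]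
  ring

lemma pd1_theta1 {t : ℝ} (ht : t ≠ 0) {y : E2} (hy : y ≠ 0) :
    pd 1 (fun z => lambOseen t z 1) y = -(f1 t (qf y) * (2 * (y 0 * y 1))) := by
  have he : (fun z : E2 => lambOseen t z 1)
      = fun z => -(f0 t (qf z) * (EuclideanSpace.proj (0 : Fin 2) : E2 →L[ℝ] ℝ) z) :=
    funext fun z => lambOseen_apply1 t z
  have h := (hasFDerivAt_radial (hasDerivAt_f0 ht (qf_pos hy).ne')
    ((EuclideanSpace.proj (0 : Fin 2) : E2 →L[ℝ] ℝ)).hasFDerivAt (x := y)).fun_neg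
  rw [pd, he, h.fderiv]
  simp [Lq_single, proj_single]
  ring

/-! ### Second space derivatives -/

lemma pdpd0_theta0 {t : ℝ} (ht : t ≠ 0) {x : E2} (hx : x ≠ 0) :
    pd 0 (fun y => pd 0 (fun z => lambOseen t z 0) y) x
      = f2 t (qf x) * (2 * x 0) * (2 * (x 0 * x 1)) + f1 t (qf x) * (2 * x 1) := by
  have hev : (fun y => pd 0 (fun z => lambOseen t z 0) y)
      =ᶠ[𝓝 x] fun y => f1 t (qf y) * (2 * (y 0 * y 1)) := by
    filter_upwards [IsOpen.mem_nhds isOpen_compl_singleton hx] with y hy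
    exact pd0_theta0 ht hy
  rw [pd, hev.fderiv_eq]
  have hg : HasFDerivAt (fun y : E2 => 2 * (y 0 * y 1))
      ((2 : ℝ) • (x 0 • (EuclideanSpace.proj 1 : E2 →L[ℝ] ℝ)
        + x 1 • (EuclideanSpace.proj 0 : E2 →L[ℝ] ℝ))) x :=
    (((EuclideanSpace.proj (0 : Fin 2) : E2 →L[ℝ] ℝ)).hasFDerivAt.mul
      ((EuclideanSpace.proj (1 : Fin 2) : E2 →L[ℝ] ℝ)).hasFDerivAt).const_mul 2
  have h := hasFDerivAt_radial (hasDerivAt_f1 ht (qf_pos hx).ne') hg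
  rw [h.fderiv]
  simp [Lq_single, proj_single]
  ring

lemma pdpd1_theta0 {t : ℝ} (ht : t ≠ 0) {x : E2} (hx : x ≠ 0) :
    pd 1 (fun y => pd 1 (fun z => lambOseen t z 0) y) x
      = f2 t (qf x) * (2 * x 1) * (2 * (x 1 * x 1)) + f1 t (qf x) * (4 * x 1)
        + f1 t (qf x) * (2 * x 1) := by
  have hev : (fun y => pd 1 (fun z => lambOseen t z 0) y)
      =ᶠ[𝓝 x] fun y => f1 t (qf y) * (2 * (y 1 * y 1)) + f0 t (qf y) := by
    filter_upwards [IsOpen.mem_nhds isOpen_compl_singleton hx] with y hy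
    exact pd1_theta0 ht hy
  rw [pd, hev.fderiv_eq]
  have hg : HasFDerivAt (fun y : E2 => 2 * (y 1 * y 1))
      ((2 : ℝ) • (x 1 • (EuclideanSpace.proj 1 : E2 →L[ℝ] ℝ)
        + x 1 • (EuclideanSpace.proj 1 : E2 →L[ℝ] ℝ))) x :=
    (((EuclideanSpace.proj (1 : Fin 2) : E2 →L[ℝ] ℝ)).hasFDerivAt.mul
      ((EuclideanSpace.proj (1 : Fin 2) : E2 →L[ℝ] ℝ)).hasFDerivAt).const_mul 2
  have h1 := hasFDerivAt_radial (hasDerivAt_f1 ht (qf_pos hx).ne') hg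
  have h2 : HasFDerivAt (fun y : E2 => f0 t (qf y)) ((f1 t (qf x)) • Lq x) x :=
    (hasDerivAt_f0 ht (qf_pos hx).ne').comp_hasFDerivAt x (hasFDerivAt_qf x)
  have h := h1.fun_add h2
  rw [h.fderiv]
  simp [Lq_single, proj_single]
  ring

lemma pdpd0_theta1 {t : ℝ} (ht : t ≠ 0) {x : E2} (hx : x ≠ 0) :
    pd 0 (fun y => pd 0 (fun z => lambOseen t z 1) y) x
      = -(f2 t (qf x) * (2 * x 0) * (2 * (x 0 * x 0)) + f1 t (qf x) * (4 * x 0)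
        + f1 t (qf x) * (2 * x 0)) := by
  have hev : (fun y => pd 0 (fun z => lambOseen t z 1) y)
      =ᶠ[𝓝 x] fun y => -(f1 t (qf y) * (2 * (y 0 * y 0)) + f0 t (qf y)) := by
    filter_upwards [IsOpen.mem_nhds isOpen_compl_singleton hx] with y hy
    exact pd0_theta1 ht hy
  rw [pd, hev.fderiv_eq]
  have hg : HasFDerivAt (fun y : E2 => 2 * (y 0 * y 0))
      ((2 : ℝ) • (x 0 • (EuclideanSpace.proj 0 : E2 →L[ℝ] ℝ)
        + x 0 • (EuclideanSpace.proj 0 : E2 →L[ℝ] ℝ))) x :=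
    (((EuclideanSpace.proj (0 : Fin 2) : E2 →L[ℝ] ℝ)).hasFDerivAt.mul
      ((EuclideanSpace.proj (0 : Fin 2) : E2 →L[ℝ] ℝ)).hasFDerivAt).const_mul 2
  have h1 := hasFDerivAt_radial (hasDerivAt_f1 ht (qf_pos hx).ne') hg
  have h2 : HasFDerivAt (fun y : E2 => f0 t (qf y)) ((f1 t (qf x)) • Lq x) x :=
    (hasDerivAt_f0 ht (qf_pos hx).ne').comp_hasFDerivAt x (hasFDerivAt_qf x)
  have h := (h1.fun_add h2).fun_neg
  rw [h.fderiv]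
  simp [Lq_single, proj_single]
  ring

lemma pdpd1_theta1 {t : ℝ} (ht : t ≠ 0) {x : E2} (hx : x ≠ 0) :
    pd 1 (fun y => pd 1 (fun z => lambOseen t z 1) y) x
      = -(f2 t (qf x) * (2 * x 1) * (2 * (x 0 * x 1)) + f1 t (qf x) * (2 * x 0)) := by
  have hev : (fun y => pd 1 (fun z => lambOseen t z 1) y)
      =ᶠ[𝓝 x] fun y => -(f1 t (qf y) * (2 * (y 0 * y 1))) := by
    filter_upwards [IsOpen.mem_nhds isOpen_compl_singleton hx] with y hy
    exact pd1_theta1 ht hy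
  rw [pd, hev.fderiv_eq]
  have hg : HasFDerivAt (fun y : E2 => 2 * (y 0 * y 1))
      ((2 : ℝ) • (x 0 • (EuclideanSpace.proj 1 : E2 →L[ℝ] ℝ)
        + x 1 • (EuclideanSpace.proj 0 : E2 →L[ℝ] ℝ))) x :=
    (((EuclideanSpace.proj (0 : Fin 2) : E2 →L[ℝ] ℝ)).hasFDerivAt.mul
      ((EuclideanSpace.proj (1 : Fin 2) : E2 →L[ℝ] ℝ)).hasFDerivAt).const_mul 2
  have h := (hasFDerivAt_radial (hasDerivAt_f1 ht (qf_pos hx).ne') hg).fun_neg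
  rw [h.fderiv]
  simp [Lq_single, proj_single]
  ring

/-! ### The pressure -/

/-- Radial pressure profile: an antiderivative of `f0²/2`. -/
def PP (t s : ℝ) : ℝ := ∫ σ in (1 : ℝ)..s, (f0 t σ) ^ 2 / 2

/-- The pressure. -/
def pres (t : ℝ) (x : E2) : ℝ := PP t (qf x)

lemma continuousOn_f0sq (t : ℝ) :
    ContinuousOn (fun σ => (f0 t σ) ^ 2 / 2) (Set.Ioi (0 : ℝ)) := by
  apply ContinuousOn.div_const
  apply ContinuousOn.pow
  unfold f0
  apply ContinuousOn.div
  · exact (Continuous.continuousOn (by continuity))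
  · exact (Continuous.continuousOn (by continuity))
  · intro σ hσ
    have : (0 : ℝ) < σ := hσ
    have := Real.pi_ne_zero
    positivity

lemma hasDerivAt_PP {t s : ℝ} (hs : 0 < s) :
    HasDerivAt (PP t) ((f0 t s) ^ 2 / 2) s := by
  have hsub : Set.uIcc (1 : ℝ) s ⊆ Set.Ioi 0 := by
    intro σ hσ
    have h1 := hσ.1
    have := lt_min one_pos hs
    exact lt_of_lt_of_le this h1
  refine intervalIntegral.integral_hasDerivAt_right
    (((continuousOn_f0sq t).mono hsub).intervalIntegrable) ?_ ?_
  · exact (continuousOn_f0sq t).stronglyMeasurableAtFilter isOpen_Ioi s hs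
  · exact (continuousOn_f0sq t).continuousAt (Ioi_mem_nhds hs)

lemma hasFDerivAt_pres {t : ℝ} {x : E2} (hx : x ≠ 0) :
    HasFDerivAt (pres t) (((f0 t (qf x)) ^ 2 / 2) • Lq x) x :=
  (hasDerivAt_PP (qf_pos hx)).comp_hasFDerivAt x (hasFDerivAt_qf x)

/-! ### Main theorem -/

/-- the Lamb–Oseen vortex solves the incompressible Navier–Stokes equations in
`ℝ²` away from the origin: there is a pressure `p(t,·)`, differentiable in space on
`ℝ² \ {0}`, with `∂ₜΘ - ΔΘ + (Θ·∇)Θ + ∇p = 0` and `div Θ = 0` for all `t > 0`, `x ≠ 0`. -/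
theorem lambOseen_solves_navier_stokes :
    ∃ p : ℝ → EuclideanSpace ℝ (Fin 2) → ℝ,
      ∀ t : ℝ, 0 < t → ∀ x : EuclideanSpace ℝ (Fin 2), x ≠ 0 →
        DifferentiableAt ℝ (p t) x ∧
        (∀ i : Fin 2,
          deriv (fun s => lambOseen s x i) t
            - (∑ j : Fin 2, pd j (fun y => pd j (fun z => lambOseen t z i) y) x)
            + convTerm (lambOseen t) x i
            + fderiv ℝ (p t) x (EuclideanSpace.single i 1) = 0) ∧
        pd 0 (fun y => lambOseen t y 0) x + pd 1 (fun y => lambOseen t y 1) x = 0 := by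
  refine ⟨pres, fun t ht x hx => ?_⟩
  have ht' : t ≠ 0 := ht.ne'
  have hS : qf x ≠ 0 := (qf_pos hx).ne'
  have hp := hasFDerivAt_pres (t := t) hx
  refine ⟨hp.differentiableAt, ?_, ?_⟩
  · intro i
    have hpres : ∀ j : Fin 2, fderiv ℝ (pres t) x (EuclideanSpace.single j 1)
        = (f0 t (qf x)) ^ 2 * x j := by
      intro j
      rw [hp.fderiv]
      simp [Lq_single]
      ring
    have hheat : fT t (qf x) = 4 * (x 0 ^ 2 + x 1 ^ 2) * f2 t (qf x) + 8 * f1 t (qf x) := by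
      have := heat_identity ht' hS
      rw [this]; rfl
    fin_cases i
    · -- i = 0
      have hderiv : deriv (fun s => lambOseen s x 0) t = fT t (qf x) * x 1 := by
        have heq : (fun s => lambOseen s x 0) = fun s => f0 s (qf x) * x 1 :=
          funext fun s => lambOseen_apply0 s x
        rw [heq]
        exact ((hasDerivAt_f0_t ht' hS).mul_const (x 1)).deriv
      simp only [Fin.mk_zero, Fin.isValue]
      rw [Fin.sum_univ_two, hderiv, pdpd0_theta0 ht' hx, pdpd1_theta0 ht' hx]
      rw [convTerm, lambOseen_apply0, lambOseen_apply1,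
        pd0_theta0 ht' hx, pd1_theta0 ht' hx, hpres 0]
      rw [hheat]
      ring
    · -- i = 1
      have hderiv : deriv (fun s => lambOseen s x 1) t = -(fT t (qf x) * x 0) := by
        have heq : (fun s => lambOseen s x 1) = fun s => -(f0 s (qf x) * x 0) :=
          funext fun s => lambOseen_apply1 s x
        rw [heq]
        exact (((hasDerivAt_f0_t ht' hS).mul_const (x 0)).neg).deriv
      simp only [Fin.mk_one, Fin.isValue]
      rw [Fin.sum_univ_two, hderiv, pdpd0_theta1 ht' hx, pdpd1_theta1 ht' hx]
      rw [convTerm, lambOseen_apply0, lambOseen_apply1,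
        pd0_theta1 ht' hx, pd1_theta1 ht' hx, hpres 1]
      rw [hheat]
      ring
  · rw [pd0_theta0 ht' hx, pd1_theta1 ht' hx]
    ring

end
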